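/- For every positive integer n there exists a bijection f from the set of noncrossing partitions of [n] onto the set of 132-avoiding permutations of [n] such that whenever x < y in the refinement order on noncrossing partitions (i.e., every block of y is a union of blocks of x and x ≠ y), the descent set of f(y) is a proper subset of the descent set of f(x). -/

import Mathlib

/-- A permutation `p` of `[n]` (modelled on `Fin n`, 0-based) is 132-avoiding if there
are no positions `i < j < k` with `p i < p k < p j`. -/
def Avoids132 {n : ℕ} (p : Equiv.Perm (Fin n)) : Prop :=
  ¬ ∃ i j k : Fin n, i < j ∧ j < k ∧ p i < p k ∧ p k < p j

/-- The descent set of `p`, in the 1-based convention of the paper: `i ∈ D(p)` iff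
`1 ≤ i ≤ n-1` and `p_i > p_{i+1}`, where `p_i` denotes the `i`-th entry of `p` in
1-based indexing (so `p_i = p ⟨i-1⟩` in 0-based indexing). -/
def DescentSet {n : ℕ} (p : Equiv.Perm (Fin n)) : Finset ℕ :=
  (Finset.range n).filter (fun i => ∃ h : 1 ≤ i ∧ i < n, p ⟨i, h.2⟩ < p ⟨i - 1, by omega⟩)

/-- `P` is a partition of `[n]` (modelled on `Fin n`): its blocks are nonempty and every
element lies in exactly one block. -/
def IsPartition {n : ℕ} (P : Finset (Finset (Fin n))) : Prop :=
  (∀ B ∈ P, B.Nonempty) ∧ ∀ i : Fin n, ∃! B, B ∈ P ∧ i ∈ B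

/-- A partition of `[n]` is noncrossing if there are no elements `a < b < c < d` with
`a, c` in one block and `b, d` in a different block. -/
def IsNoncrossing {n : ℕ} (P : Finset (Finset (Fin n))) : Prop :=
  ¬ ∃ a b c d : Fin n, a < b ∧ b < c ∧ c < d ∧
    ∃ B₁ ∈ P, ∃ B₂ ∈ P, B₁ ≠ B₂ ∧ a ∈ B₁ ∧ c ∈ B₁ ∧ b ∈ B₂ ∧ d ∈ B₂

/-- `x` refines `y`: every block of `y` is a union of blocks of `x`. -/
def RefinesLE {n : ℕ} (x y : Finset (Finset (Fin n))) : Prop :=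
  ∀ C ∈ y, ∃ s ⊆ x, C = s.sup id


namespace Stmt1Aux
open Finset
variable {n : ℕ}

/-- least position `i` with `p i ≤ p j`. -/
def mu (p : Equiv.Perm (Fin n)) (j : Fin n) : Fin n :=
  (Finset.univ.filter (fun i => p i ≤ p j)).min' ⟨j, by simp⟩

lemma p_mu_le (p : Equiv.Perm (Fin n)) (j : Fin n) : p (mu p j) ≤ p j := by
  have := Finset.min'_mem (Finset.univ.filter (fun i => p i ≤ p j)) ⟨j, by simp⟩
  simpa [mu] using this

lemma mu_le (p : Equiv.Perm (Fin n)) (j : Fin n) : mu p j ≤ j :=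
  Finset.min'_le _ j (by simp)

lemma mu_min (p : Equiv.Perm (Fin n)) {i j : Fin n} (h : p i ≤ p j) : mu p j ≤ i :=
  Finset.min'_le _ i (by simp [h])

lemma lt_of_lt_mu (p : Equiv.Perm (Fin n)) {i j : Fin n} (h : i < mu p j) : p j < p i := by
  by_contra h'
  exact absurd (mu_min p (not_lt.mp h')) (not_le.mpr h)

lemma mu_mu (p : Equiv.Perm (Fin n)) (j : Fin n) : mu p (mu p j) = mu p j := by
  refine le_antisymm (mu_le _ _) ?_
  by_contra h
  push_neg at h
  exact ((lt_of_lt_mu p h).trans_le ((p_mu_le p (mu p j)).trans (p_mu_le p j))).false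

lemma p_mu_lt (p : Equiv.Perm (Fin n)) {j : Fin n} (h : mu p j ≠ j) : p (mu p j) < p j :=
  lt_of_le_of_ne (p_mu_le p j) (fun he => h (p.injective he))
/-- within a block, values increase with position (needs 132-avoidance) -/
lemma lt_of_same_mu {p : Equiv.Perm (Fin n)} (hp : Avoids132 p) {k j : Fin n}
    (hmu : mu p k = mu p j) (hkj : k < j) : p k < p j := by
  rcases eq_or_lt_of_le (mu_le p k) with hk | hk
  · -- k = mu p k = mu p j, so p k = p (mu p j) ≤ p j, strict since k ≠ j
    have : p (mu p j) ≤ p j := p_mu_le p j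
    rw [← hmu, hk] at this
    exact lt_of_le_of_ne this (fun he => hkj.ne (p.injective he))
  · -- mu p k < k
    by_contra hc
    push_neg at hc
    have hjk : p j < p k := lt_of_le_of_ne hc (fun he => hkj.ne' (p.injective he))
    have h1 : p (mu p k) < p j := by
      have := p_mu_le p j; rw [← hmu] at this
      exact lt_of_le_of_ne this (fun he => ((hk.trans hkj).ne) (p.injective he))
    exact hp ⟨mu p k, k, j, hk, hkj, h1, hjk⟩

/-- across blocks: larger block-min means smaller value -/
lemma lt_of_mu_lt (p : Equiv.Perm (Fin n)) {k j : Fin n} (h : mu p j < mu p k) : p k < p j :=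
  (lt_of_lt_mu p h).trans_le (p_mu_le p j)

lemma lt_iff_lex {p : Equiv.Perm (Fin n)} (hp : Avoids132 p) (k j : Fin n) :
    p k < p j ↔ (mu p j < mu p k ∨ (mu p k = mu p j ∧ k < j)) := by
  constructor
  · intro h
    rcases lt_trichotomy (mu p k) (mu p j) with hm | hm | hm
    · exact absurd (lt_of_mu_lt p hm) (asymm h)
    · rcases lt_trichotomy k j with hkj | hkj | hkj
      · exact Or.inr ⟨hm, hkj⟩
      · exact absurd rfl (by subst hkj; exact h.ne)
      · exact absurd (lt_of_same_mu hp hm.symm hkj) (asymm h)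
    · exact Or.inl hm
  · rintro (h | ⟨h1, h2⟩)
    · exact lt_of_mu_lt p h
    · exact lt_of_same_mu hp h1 h2

/-- descent at position j (0-based, j ≥ 1) iff j is a left-to-right minimum position iff mu j = j -/
lemma descent_iff_mu {p : Equiv.Perm (Fin n)} (hp : Avoids132 p) {j : Fin n} (hj : 0 < j.val) :
    (p j < p ⟨j.val - 1, by omega⟩ ↔ mu p j = j) := by
  constructor
  · intro h
    by_contra hne
    have hm : mu p j < j := lt_of_le_of_ne (mu_le p j) hne
    set j' : Fin n := ⟨j.val - 1, by omega⟩ with hj'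
    have hmj' : mu p j ≠ j' := by
      intro he
      exact absurd (he ▸ p_mu_le p j) (not_le.mpr h)
    have hvne : (mu p j).val ≠ j.val - 1 := fun hv => hmj' (Fin.ext hv)
    have hmlt : mu p j < j' := by
      rw [Fin.lt_def] at hm ⊢
      show (mu p j).val < j.val - 1
      omega
    have hj'j : j' < j := by rw [Fin.lt_def]; show j.val - 1 < j.val; omega
    exact hp ⟨mu p j, j', j, hmlt, hj'j, p_mu_lt p hne, h⟩
  · intro h
    have h2 : (⟨j.val - 1, by omega⟩ : Fin n) < j := by
      rw [Fin.lt_def]; show j.val - 1 < j.val; omega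
    exact lt_of_lt_mu p (h2.trans_le (le_of_eq h.symm))
def SameBlock (P : Finset (Finset (Fin n))) (i j : Fin n) : Prop :=
  ∃ B ∈ P, i ∈ B ∧ j ∈ B

open Classical in
/-- min of the block containing i (junk `i`-padded for totality) -/
noncomputable def nu (P : Finset (Finset (Fin n))) (i : Fin n) : Fin n :=
  (insert i (Finset.univ.filter (fun j => SameBlock P i j))).min' (insert_nonempty _ _)

variable {P : Finset (Finset (Fin n))}

lemma sb_refl (hP : IsPartition P) (i : Fin n) : SameBlock P i i := by
  obtain ⟨B, ⟨hBP, hiB⟩, -⟩ := hP.2 i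
  exact ⟨B, hBP, hiB, hiB⟩

lemma sb_symm {i j : Fin n} (h : SameBlock P i j) : SameBlock P j i := by
  obtain ⟨B, hB, h1, h2⟩ := h; exact ⟨B, hB, h2, h1⟩

lemma sb_trans (hP : IsPartition P) {i j k : Fin n} (h1 : SameBlock P i j)
    (h2 : SameBlock P j k) : SameBlock P i k := by
  obtain ⟨B, hB, hi, hj⟩ := h1
  obtain ⟨C, hC, hj', hk⟩ := h2
  have : B = C := (hP.2 j).unique ⟨hB, hj⟩ ⟨hC, hj'⟩
  exact ⟨B, hB, hi, this ▸ hk⟩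

open Classical in
lemma nu_eq_min' (hP : IsPartition P) (i : Fin n) :
    nu P i = (Finset.univ.filter (fun j => SameBlock P i j)).min'
      ⟨i, by simp [sb_refl hP i]⟩ := by
  rw [nu]
  congr 1
  · exact Finset.insert_eq_self.mpr (by simp [sb_refl hP i])

lemma sb_nu (hP : IsPartition P) (i : Fin n) : SameBlock P i (nu P i) := by
  classical
  have := Finset.min'_mem (Finset.univ.filter (fun j => SameBlock P i j))
    ⟨i, by simp [sb_refl hP i]⟩
  rw [← nu_eq_min' hP i] at this
  simpa using this

lemma nu_le_of_sb (hP : IsPartition P) {i j : Fin n} (h : SameBlock P i j) : nu P i ≤ j := by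
  classical
  rw [nu_eq_min' hP i]
  exact Finset.min'_le _ _ (by simp [h])

lemma nu_le (hP : IsPartition P) (i : Fin n) : nu P i ≤ i := nu_le_of_sb hP (sb_refl hP i)

lemma nu_congr (hP : IsPartition P) {i j : Fin n} (h : SameBlock P i j) : nu P i = nu P j := by
  classical
  rw [nu_eq_min' hP i, nu_eq_min' hP j]
  congr 1
  ext k
  simp only [Finset.mem_filter, Finset.mem_univ, true_and]
  exact ⟨fun h' => sb_trans hP (sb_symm h) h', fun h' => sb_trans hP h h'⟩

lemma nu_nu (hP : IsPartition P) (i : Fin n) : nu P (nu P i) = nu P i :=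
  (nu_congr hP (sb_nu hP i)).symm

lemma sb_iff_nu_eq (hP : IsPartition P) {i j : Fin n} :
    SameBlock P i j ↔ nu P i = nu P j :=
  ⟨nu_congr hP, fun h => by
    have h1 := sb_nu hP i
    have h2 := sb_nu hP j
    rw [h] at h1
    exact sb_trans hP h1 (sb_symm h2)⟩

/-- the noncrossing property of nu -/
lemma nu_nc (hP : IsPartition P) (hNC : IsNoncrossing P) {i j : Fin n}
    (h1 : nu P j ≤ i) (h2 : i ≤ j) : nu P j ≤ nu P i := by
  by_contra hc
  push_neg at hc  -- nu P i < nu P j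
  have hij : i ≠ j := by rintro rfl; exact hc.ne rfl
  have hnji : nu P j ≠ i := by
    intro he
    have : nu P i = nu P j := by
      rw [← he]; exact nu_nu hP j
    exact hc.ne this
  have hb : nu P j < i := lt_of_le_of_ne h1 hnji
  obtain ⟨Bi, hBi, hiBi, hnuiBi⟩ := sb_nu hP i
  obtain ⟨Bj, hBj, hjBj, hnujBj⟩ := sb_nu hP j
  have hne : Bi ≠ Bj := by
    rintro rfl
    exact hc.ne (nu_congr hP ⟨Bi, hBi, hiBi, hjBj⟩)
  exact hNC ⟨nu P i, nu P j, i, j, hc, hb, lt_of_le_of_ne h2 hij,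
    Bi, hBi, Bj, hBj, hne, hnuiBi, hiBi, hnujBj, hjBj⟩
lemma lex_lt {nn A B k j : ℕ} (hk : k < nn) (hj : j < nn) :
    A * nn + k < B * nn + j ↔ (A < B ∨ (A = B ∧ k < j)) := by
  constructor
  · intro h
    rcases lt_trichotomy A B with hAB | hAB | hAB
    · exact Or.inl hAB
    · subst hAB; exact Or.inr ⟨rfl, by omega⟩
    · exfalso
      have h1 : B * nn + j < B * nn + nn := by omega
      have h2 : (B + 1) * nn ≤ A * nn := Nat.mul_le_mul_right nn hAB
      have : B * nn + nn = (B + 1) * nn := by ring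
      omega
  · rintro (hAB | ⟨hAB, hkj⟩)
    · have h2 : (A + 1) * nn ≤ B * nn := Nat.mul_le_mul_right nn hAB
      have : A * nn + nn = (A + 1) * nn := by ring
      omega
    · subst hAB; omega

def rank (key : Fin n → ℕ) (j : Fin n) : Fin n :=
  ⟨(Finset.univ.filter (fun k => key k < key j)).card, by
    have hsub : (Finset.univ.filter (fun k => key k < key j)) ⊆ Finset.univ.erase j := by
      intro k hk
      simp only [Finset.mem_filter] at hk
      exact Finset.mem_erase.mpr ⟨fun he => by simp [he] at hk, Finset.mem_univ _⟩
    have := Finset.card_le_card hsub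
    have h2 : (Finset.univ.erase j).card = n - 1 := by
      rw [Finset.card_erase_of_mem (Finset.mem_univ _)]
      simp
    have := j.pos
    omega⟩

lemma rank_lt_rank {key : Fin n → ℕ} {k j : Fin n} (h : key k < key j) :
    rank key k < rank key j := by
  have hsub : (Finset.univ.filter (fun i => key i < key k)) ⊆
      (Finset.univ.filter (fun i => key i < key j)) := by
    intro i hi
    simp only [Finset.mem_filter] at hi ⊢
    exact ⟨Finset.mem_univ _, hi.2.trans h⟩
  show (Finset.univ.filter (fun i => key i < key k)).card <
    (Finset.univ.filter (fun i => key i < key j)).card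
  apply Finset.card_lt_card
  rw [Finset.ssubset_iff_of_subset hsub]
  exact ⟨k, by simp [h], by simp⟩

lemma rank_injective {key : Fin n → ℕ} (hkey : Function.Injective key) :
    Function.Injective (rank key) := by
  intro k j h
  rcases lt_trichotomy (key k) (key j) with hm | hm | hm
  · exact absurd h (rank_lt_rank hm).ne
  · exact hkey hm
  · exact absurd h.symm (rank_lt_rank hm).ne

lemma rank_lt_iff {key : Fin n → ℕ} (hkey : Function.Injective key) {k j : Fin n} :
    rank key k < rank key j ↔ key k < key j := by
  refine ⟨fun h => ?_, rank_lt_rank⟩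
  rcases lt_trichotomy (key k) (key j) with hm | hm | hm
  · exact hm
  · exact absurd (congrArg (rank key) (hkey hm)) (by intro he; rw [hkey hm] at h; exact h.false)
  · exact absurd (rank_lt_rank hm) (asymm h)

lemma rank_le_iff {key : Fin n → ℕ} (hkey : Function.Injective key) {k j : Fin n} :
    rank key k ≤ rank key j ↔ key k ≤ key j := by
  rw [← not_lt, ← not_lt, not_iff_not]
  exact rank_lt_iff hkey



/-! ### The permutation associated to a partition -/

noncomputable def keyP (P : Finset (Finset (Fin n))) (i : Fin n) : ℕ :=
  (n - 1 - (nu P i).val) * n + i.val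

lemma keyP_injective (P : Finset (Finset (Fin n))) : Function.Injective (keyP P) := by
  intro k j h
  have h2 : ∀ (A m : ℕ), m < n → (A * n + m) % n = m := by
    intro A m hm
    rw [Nat.add_comm, Nat.add_mul_mod_self_right, Nat.mod_eq_of_lt hm]
  have h3 : (keyP P k) % n = k.val := h2 _ _ k.isLt
  have h4 : (keyP P j) % n = j.val := h2 _ _ j.isLt
  apply Fin.ext
  rw [← h3, ← h4, h]

lemma keyP_lt_iff {P : Finset (Finset (Fin n))} {k j : Fin n} :
    keyP P k < keyP P j ↔ (nu P j < nu P k ∨ (nu P k = nu P j ∧ k < j)) := by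
  have ha := (nu P k).isLt
  have hb := (nu P j).isLt
  rw [keyP, keyP, lex_lt k.isLt j.isLt]
  simp only [Fin.lt_def]
  constructor
  · rintro (h | ⟨h1, h2⟩)
    · left; omega
    · right; exact ⟨Fin.ext (by omega), h2⟩
  · rintro (h | ⟨h1, h2⟩)
    · left; omega
    · right
      refine ⟨?_, h2⟩
      have := congrArg Fin.val h1
      omega

noncomputable def toPerm (P : Finset (Finset (Fin n))) : Equiv.Perm (Fin n) :=
  Equiv.ofBijective (rank (keyP P))
    (Finite.injective_iff_bijective.mp (rank_injective (keyP_injective P)))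

lemma toPerm_apply (P : Finset (Finset (Fin n))) (j : Fin n) :
    toPerm P j = rank (keyP P) j := rfl

lemma toPerm_lt_iff {P : Finset (Finset (Fin n))} {k j : Fin n} :
    toPerm P k < toPerm P j ↔ keyP P k < keyP P j := by
  rw [toPerm_apply, toPerm_apply]
  exact rank_lt_iff (keyP_injective P)

lemma toPerm_le_iff {P : Finset (Finset (Fin n))} {k j : Fin n} :
    toPerm P k ≤ toPerm P j ↔ keyP P k ≤ keyP P j := by
  rw [toPerm_apply, toPerm_apply]
  exact rank_le_iff (keyP_injective P)

lemma mu_toPerm {P : Finset (Finset (Fin n))} (hP : IsPartition P) (j : Fin n) :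
    mu (toPerm P) j = nu P j := by
  apply le_antisymm
  · apply mu_min
    rw [toPerm_le_iff]
    calc keyP P (nu P j) = (n - 1 - (nu P j).val) * n + (nu P j).val := by
          rw [keyP, nu_nu hP]
      _ ≤ (n - 1 - (nu P j).val) * n + j.val := by
          have := nu_le hP j; rw [Fin.le_def] at this; omega
      _ = keyP P j := rfl
  · by_contra hc
    push_neg at hc
    have hle : toPerm P (mu (toPerm P) j) ≤ toPerm P j := p_mu_le _ j
    rw [toPerm_le_iff] at hle
    have hni : nu P (mu (toPerm P) j) < nu P j := lt_of_le_of_lt (nu_le hP _) hc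
    have hkey : keyP P j < keyP P (mu (toPerm P) j) := keyP_lt_iff.mpr (Or.inl hni)
    omega

lemma avoids_toPerm {P : Finset (Finset (Fin n))} (hP : IsPartition P)
    (hNC : IsNoncrossing P) : Avoids132 (toPerm P) := by
  rintro ⟨i, j, k, hij, hjk, h1, h2⟩
  rw [toPerm_lt_iff, keyP_lt_iff] at h1 h2
  have hjk' : nu P j < nu P k := by
    rcases h2 with h | ⟨-, h⟩
    · exact h
    · exact absurd h (asymm hjk)
  have hj_lt : j < nu P k := by
    by_contra hcc
    push_neg at hcc
    exact absurd (nu_nc hP hNC hcc hjk.le) (not_le.mpr hjk')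
  have hik : nu P i < nu P k := lt_of_le_of_lt (nu_le hP i) (lt_trans hij hj_lt)
  rcases h1 with h | ⟨h, -⟩
  · exact absurd h (asymm hik)
  · exact absurd h hik.ne

/-! ### Fibers of mu: the partition associated to a permutation -/

def fibers (p : Equiv.Perm (Fin n)) : Finset (Finset (Fin n)) :=
  Finset.univ.image (fun j => Finset.univ.filter (fun k => mu p k = mu p j))

lemma isPartition_fibers (p : Equiv.Perm (Fin n)) : IsPartition (fibers p) := by
  constructor
  · intro B hB
    rw [fibers, Finset.mem_image] at hB
    obtain ⟨j, -, rfl⟩ := hB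
    exact ⟨j, by simp⟩
  · intro i
    refine ⟨Finset.univ.filter (fun k => mu p k = mu p i),
      ⟨Finset.mem_image_of_mem _ (Finset.mem_univ i), by simp⟩, ?_⟩
    rintro B ⟨hB, hiB⟩
    rw [fibers, Finset.mem_image] at hB
    obtain ⟨j, -, rfl⟩ := hB
    simp only [Finset.mem_filter, Finset.mem_univ, true_and] at hiB
    ext k
    simp only [Finset.mem_filter, Finset.mem_univ, true_and, hiB]

lemma noncrossing_fibers {p : Equiv.Perm (Fin n)} (hp : Avoids132 p) :
    IsNoncrossing (fibers p) := by
  rintro ⟨a, b, c, d, hab, hbc, hcd, B₁, hB₁, B₂, hB₂, hne, haB, hcB, hbB, hdB⟩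
  rw [fibers, Finset.mem_image] at hB₁ hB₂
  obtain ⟨j₁, -, rfl⟩ := hB₁
  obtain ⟨j₂, -, rfl⟩ := hB₂
  simp only [Finset.mem_filter, Finset.mem_univ, true_and] at haB hcB hbB hdB
  have hac : mu p a = mu p c := haB.trans hcB.symm
  have hbd : mu p b = mu p d := hbB.trans hdB.symm
  have hmne : mu p a ≠ mu p b := by
    intro he
    apply hne
    ext k
    simp only [Finset.mem_filter, Finset.mem_univ, true_and, ← haB, ← hbB, he]
  rcases lt_or_gt_of_ne hmne with hml | hml
  · -- mu a < mu b : pattern (mu b, c, d)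
    have h1 : mu p b < c := lt_of_le_of_lt (mu_le p b) hbc
    have h2 : p (mu p b) < p d := by
      have hle : p (mu p b) ≤ p d := by rw [hbd]; exact p_mu_le p d
      refine lt_of_le_of_ne hle (fun he => ?_)
      have hbd' : mu p b = d := p.injective he
      have : (d : Fin n) < d := (hbd' ▸ (mu_le p b)).trans_lt (hbc.trans hcd)
      exact absurd this (lt_irrefl _)
    have h3 : p d < p c := by
      have hda : p d < p (mu p a) := by
        have : mu p a < mu p d := hbd ▸ hml
        exact lt_of_lt_mu p this
      exact hda.trans_le (hac ▸ p_mu_le p c)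
    exact hp ⟨mu p b, c, d, h1, hcd, h2, h3⟩
  · -- mu b < mu a : pattern (mu a, b, c)
    have h1 : mu p a < b := lt_of_le_of_lt (mu_le p a) hab
    have h2 : p (mu p a) < p c := by
      have hle : p (mu p a) ≤ p c := hac ▸ p_mu_le p c
      refine lt_of_le_of_ne hle (fun he => ?_)
      have hac' : mu p a = c := p.injective he
      have : (c : Fin n) < c := (hac' ▸ (mu_le p a)).trans_lt (hab.trans hbc)
      exact absurd this (lt_irrefl _)
    have h3 : p c < p b := by
      have hcb : p c < p (mu p b) := by
        have : mu p b < mu p c := hac ▸ hml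
        exact lt_of_lt_mu p this
      exact hcb.trans_le (p_mu_le p b)
    exact hp ⟨mu p a, b, c, h1, hbc, h2, h3⟩

lemma sb_fibers {p : Equiv.Perm (Fin n)} {i j : Fin n} :
    SameBlock (fibers p) i j ↔ mu p i = mu p j := by
  constructor
  · rintro ⟨B, hB, hi, hj⟩
    rw [fibers, Finset.mem_image] at hB
    obtain ⟨j₀, -, rfl⟩ := hB
    simp only [Finset.mem_filter, Finset.mem_univ, true_and] at hi hj
    exact hi.trans hj.symm
  · intro h
    refine ⟨Finset.univ.filter (fun k => mu p k = mu p j),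
      Finset.mem_image_of_mem _ (Finset.mem_univ j), by simp [h], by simp⟩

lemma nu_fibers (p : Equiv.Perm (Fin n)) (j : Fin n) : nu (fibers p) j = mu p j := by
  classical
  rw [nu_eq_min' (isPartition_fibers p)]
  apply le_antisymm
  · apply Finset.min'_le
    simp only [Finset.mem_filter, Finset.mem_univ, true_and, sb_fibers]
    exact (mu_mu p j).symm
  · apply Finset.le_min'
    intro y hy
    simp only [Finset.mem_filter, Finset.mem_univ, true_and, sb_fibers] at hy
    rw [hy]
    exact mu_le p y

lemma block_eq_fiber {P : Finset (Finset (Fin n))} (hP : IsPartition P)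
    {B : Finset (Fin n)} {j : Fin n} (hB : B ∈ P) (hj : j ∈ B) :
    B = Finset.univ.filter (fun k => nu P k = nu P j) := by
  ext k
  simp only [Finset.mem_filter, Finset.mem_univ, true_and]
  constructor
  · intro hk
    exact nu_congr hP ⟨B, hB, hk, hj⟩
  · intro hk
    obtain ⟨C, hC, hkC, hjC⟩ := (sb_iff_nu_eq hP).mpr hk
    have : C = B := (hP.2 j).unique ⟨hC, hjC⟩ ⟨hB, hj⟩
    exact this ▸ hkC

lemma fiber_image_eq {P : Finset (Finset (Fin n))} (hP : IsPartition P) :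
    Finset.univ.image (fun j => Finset.univ.filter (fun k => nu P k = nu P j)) = P := by
  ext B
  simp only [Finset.mem_image, Finset.mem_univ, true_and]
  constructor
  · rintro ⟨j, rfl⟩
    obtain ⟨Bj, ⟨hBjP, hjBj⟩, -⟩ := hP.2 j
    rw [← block_eq_fiber hP hBjP hjBj]
    exact hBjP
  · intro hB
    obtain ⟨j, hj⟩ := hP.1 B hB
    exact ⟨j, (block_eq_fiber hP hB hj).symm⟩

lemma fibers_toPerm {P : Finset (Finset (Fin n))} (hP : IsPartition P) :
    fibers (toPerm P) = P := by
  rw [fibers]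
  have hmu : ∀ j k : Fin n, (mu (toPerm P) k = mu (toPerm P) j) ↔ (nu P k = nu P j) := by
    intro j k
    rw [mu_toPerm hP, mu_toPerm hP]
  calc Finset.univ.image
        (fun j => Finset.univ.filter (fun k => mu (toPerm P) k = mu (toPerm P) j))
      = Finset.univ.image (fun j => Finset.univ.filter (fun k => nu P k = nu P j)) := by
        apply Finset.image_congr
        intro j _
        exact Finset.filter_congr (fun k _ => by rw [hmu])
    _ = P := fiber_image_eq hP

lemma card_filter_lt_perm (p : Equiv.Perm (Fin n)) (j : Fin n) :
    (Finset.univ.filter (fun k => p k < p j)).card = (p j).val := by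
  have himg : Finset.image p (Finset.univ.filter (fun k => p k < p j))
      = Finset.Iio (p j) := by
    ext v
    simp only [Finset.mem_image, Finset.mem_filter, Finset.mem_univ, true_and,
      Finset.mem_Iio]
    constructor
    · rintro ⟨k, hk, rfl⟩; exact hk
    · intro hv; exact ⟨p.symm v, by simp [hv], by simp⟩
  calc (Finset.univ.filter (fun k => p k < p j)).card
      = (Finset.image p (Finset.univ.filter (fun k => p k < p j))).card :=
        (Finset.card_image_of_injective _ p.injective).symm
    _ = (Finset.Iio (p j)).card := by rw [himg]
    _ = (p j).val := by simp

lemma toPerm_fibers {p : Equiv.Perm (Fin n)} (hp : Avoids132 p) :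
    toPerm (fibers p) = p := by
  apply Equiv.ext
  intro j
  have hiff : ∀ k, (keyP (fibers p) k < keyP (fibers p) j ↔ p k < p j) := by
    intro k
    rw [keyP_lt_iff, lt_iff_lex hp k j, nu_fibers, nu_fibers]
  rw [toPerm_apply]
  apply Fin.ext
  show (Finset.univ.filter (fun k => keyP (fibers p) k < keyP (fibers p) j)).card
      = (p j).val
  rw [Finset.filter_congr (fun k _ => hiff k), card_filter_lt_perm]

/-! ### Descent sets -/

lemma mem_descentSet_iff {p : Equiv.Perm (Fin n)} (hp : Avoids132 p) (i : ℕ) :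
    i ∈ DescentSet p ↔ ∃ h : 1 ≤ i ∧ i < n, mu p ⟨i, h.2⟩ = ⟨i, h.2⟩ := by
  simp only [DescentSet, Finset.mem_filter, Finset.mem_range]
  constructor
  · rintro ⟨-, h, hd⟩
    exact ⟨h, (descent_iff_mu hp (show 0 < (⟨i, h.2⟩ : Fin n).val from h.1)).mp hd⟩
  · rintro ⟨h, hmu⟩
    exact ⟨h.2, h, (descent_iff_mu hp (show 0 < (⟨i, h.2⟩ : Fin n).val from h.1)).mpr hmu⟩

/-! ### Refinement -/

lemma sb_mono {x y : Finset (Finset (Fin n))} (hx : IsPartition x) (hy : IsPartition y)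
    (href : RefinesLE x y) {i j : Fin n} (h : SameBlock x i j) : SameBlock y i j := by
  obtain ⟨B, hB, hi, hj⟩ := h
  obtain ⟨C, ⟨hC, hiC⟩, -⟩ := hy.2 i
  obtain ⟨s, hs, hCs⟩ := href C hC
  have hiC' : i ∈ s.sup id := hCs ▸ hiC
  rw [Finset.mem_sup] at hiC'
  obtain ⟨B', hB's, hiB'⟩ := hiC'
  have hB'x : B' ∈ x := hs hB's
  have hBB' : B = B' := (hx.2 i).unique ⟨hB, hi⟩ ⟨hB'x, hiB'⟩
  have hBC : B ⊆ C := by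
    rw [hCs]
    exact hBB' ▸ Finset.le_sup (f := id) hB's
  exact ⟨C, hC, hiC, hBC hj⟩

lemma nu_anti {x y : Finset (Finset (Fin n))} (hx : IsPartition x) (hy : IsPartition y)
    (href : RefinesLE x y) (i : Fin n) : nu y i ≤ nu x i :=
  nu_le_of_sb hy (sb_mono hx hy href (sb_nu hx i))

end Stmt1Aux

open Stmt1Aux in
/-- For every positive integer `n` there is a bijection `f` from the set of
noncrossing partitions of `[n]` onto the set of 132-avoiding permutations of `[n]` such that
whenever `x < y` in the refinement order (every block of `y` is a union of blocks of `x` and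
`x ≠ y`), the descent set of `f y` is a proper subset of the descent set of `f x`. -/
theorem stmt_1 (n : ℕ) (hn : 0 < n) :
    ∃ f : {P : Finset (Finset (Fin n)) // IsPartition P ∧ IsNoncrossing P} ≃
          {p : Equiv.Perm (Fin n) // Avoids132 p},
      ∀ x y : {P : Finset (Finset (Fin n)) // IsPartition P ∧ IsNoncrossing P},
        RefinesLE x.val y.val → x.val ≠ y.val →
        DescentSet (f y).val ⊂ DescentSet (f x).val := by
  classical
  refine ⟨⟨fun x => ⟨toPerm x.1, avoids_toPerm x.2.1 x.2.2⟩,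
      fun p => ⟨fibers p.1, isPartition_fibers p.1, noncrossing_fibers p.2⟩,
      fun x => Subtype.ext (fibers_toPerm x.2.1),
      fun p => Subtype.ext (toPerm_fibers p.2)⟩, ?_⟩
  intro x y href hne
  show DescentSet (toPerm y.1) ⊂ DescentSet (toPerm x.1)
  have hx := x.2.1
  have hy := y.2.1
  have hdx : ∀ i : ℕ, i ∈ DescentSet (toPerm x.1) ↔
      ∃ h : 1 ≤ i ∧ i < n, nu x.1 ⟨i, h.2⟩ = ⟨i, h.2⟩ := by
    intro i
    rw [mem_descentSet_iff (avoids_toPerm x.2.1 x.2.2)]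
    constructor <;> rintro ⟨h, hm⟩ <;> refine ⟨h, ?_⟩
    · rw [← mu_toPerm hx]; exact hm
    · rw [mu_toPerm hx]; exact hm
  have hdy : ∀ i : ℕ, i ∈ DescentSet (toPerm y.1) ↔
      ∃ h : 1 ≤ i ∧ i < n, nu y.1 ⟨i, h.2⟩ = ⟨i, h.2⟩ := by
    intro i
    rw [mem_descentSet_iff (avoids_toPerm y.2.1 y.2.2)]
    constructor <;> rintro ⟨h, hm⟩ <;> refine ⟨h, ?_⟩
    · rw [← mu_toPerm hy]; exact hm
    · rw [mu_toPerm hy]; exact hm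
  rw [Finset.ssubset_def]
  constructor
  · intro i hi
    rw [hdy] at hi
    obtain ⟨h, hm⟩ := hi
    rw [hdx]
    refine ⟨h, le_antisymm (nu_le hx _) ?_⟩
    calc (⟨i, h.2⟩ : Fin n) = nu y.1 ⟨i, h.2⟩ := hm.symm
      _ ≤ nu x.1 ⟨i, h.2⟩ := nu_anti hx hy href _
  · intro hcon
    have hex : ∃ j, nu x.1 j ≠ nu y.1 j := by
      by_contra hc
      push_neg at hc
      apply hne
      rw [← fiber_image_eq hx, ← fiber_image_eq hy]
      apply Finset.image_congr
      intro j _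
      exact Finset.filter_congr (fun k _ => by rw [hc k, hc j])
    obtain ⟨j, hj⟩ := hex
    have hle : nu y.1 j ≤ nu x.1 j := nu_anti hx hy href j
    have hlt : nu y.1 j < nu x.1 j := lt_of_le_of_ne hle (fun h => hj h.symm)
    set i := nu x.1 j with hidef
    have h1 : nu x.1 i = i := nu_nu hx j
    have h2 : nu y.1 i < i := by
      have hsb : SameBlock x.1 j i := sb_nu hx j
      have hyy : nu y.1 i = nu y.1 j := (nu_congr hy (sb_mono hx hy href hsb)).symm
      rw [hyy]
      exact hlt
    have hval : (nu y.1 i).val < i.val := h2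
    have hmem : i.val ∈ DescentSet (toPerm x.1) := by
      rw [hdx]
      refine ⟨⟨by omega, i.isLt⟩, ?_⟩
      rw [Fin.eta]
      exact h1
    have hmem2 := hcon hmem
    rw [hdy] at hmem2
    obtain ⟨h, hm⟩ := hmem2
    rw [Fin.eta] at hm
    exact absurd hm h2.ne
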